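/- Let P = 𝔽₂[y₁, y₂, y₃, b₁, b₂, z] be the polynomial ring over the field with two elements in six variables, let I ⊆ P be the ideal generated by y₁y₂, y₁y₃, y₂y₃, y₃², y₂b₁, y₃b₁, y₁b₂, y₃b₂, b₁b₂, b₁² + y₁²z, b₂² + y₂²z, let A = P/I, and let k = z + b₁ + y₁² + b₂ + y₂². In the quotient ring A/(k), the annihilator ideal of the image of the element y₁z + y₁b₁ + y₂z + y₂b₂ equals the ideal generated by the image of y₃. -/

import Mathlib

noncomputable section

open MvPolynomial

/-- The polynomial ring `𝔽₂[y₁, y₂, y₃, b₁, b₂, z]`. -/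
abbrev P : Type := MvPolynomial (Fin 6) (ZMod 2)

def y₁ : P := X 0
def y₂ : P := X 1
def y₃ : P := X 2
def b₁ : P := X 3
def b₂ : P := X 4
def z : P := X 5

/-- The ideal `I = (y₁y₂, y₁y₃, y₂y₃, y₃², y₂b₁, y₃b₁, y₁b₂, y₃b₂, b₁b₂, b₁²+y₁²z, b₂²+y₂²z)`. -/
def I6 : Ideal P :=
  Ideal.span {y₁ * y₂, y₁ * y₃, y₂ * y₃, y₃ ^ 2, y₂ * b₁, y₃ * b₁, y₁ * b₂, y₃ * b₂, b₁ * b₂,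
    b₁ ^ 2 + y₁ ^ 2 * z, b₂ ^ 2 + y₂ ^ 2 * z}

/-- The quotient ring `A = P/I`. -/
abbrev A : Type := P ⧸ I6

/-- The element `k = z + b₁ + y₁² + b₂ + y₂²`. -/
def k : P := z + b₁ + y₁ ^ 2 + b₂ + y₂ ^ 2

/-- The quotient `A/(k)`. -/
abbrev B : Type := A ⧸ Ideal.span {Ideal.Quotient.mk I6 k}

/-- The canonical map `P → B`. -/
def toB (p : P) : B :=
  Ideal.Quotient.mk (Ideal.span {Ideal.Quotient.mk I6 k}) (Ideal.Quotient.mk I6 p)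

/-! ### Auxiliary definitions -/

def w19 : P := y₁ * z + y₁ * b₁ + y₂ * z + y₂ * b₂

def J1 : Ideal P := I6 ⊔ Ideal.span {k}

def K2 : Ideal P := J1 ⊔ Ideal.span {y₃}

def g₁ : P := b₁ ^ 2 + y₁ ^ 2 * b₁ + y₁ ^ 4
def g₂ : P := b₂ ^ 2 + y₂ ^ 2 * b₂ + y₂ ^ 4

def σ₁ : P →ₐ[ZMod 2] P :=
  aeval fun i => if i = 0 then X 0 else if i = 3 then X 3 else if i = 5 then X 3 + X 0 ^ 2 else 0
def σ₂ : P →ₐ[ZMod 2] P :=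
  aeval fun i => if i = 1 then X 1 else if i = 4 then X 4 else if i = 5 then X 4 + X 1 ^ 2 else 0
def σ₀ : P →ₐ[ZMod 2] P := aeval fun _ => 0

lemma two_eq_zero : (2 : P) = 0 := by exact_mod_cast CharP.cast_eq_zero P 2

/-! values of the substitutions on generators -/

@[simp] lemma σ₁_y₁ : σ₁ y₁ = y₁ := by simp [σ₁, y₁]
@[simp] lemma σ₁_y₂ : σ₁ y₂ = 0 := by simp [σ₁, y₂]
@[simp] lemma σ₁_y₃ : σ₁ y₃ = 0 := by simp [σ₁, y₃]
@[simp] lemma σ₁_b₁ : σ₁ b₁ = b₁ := by simp [σ₁, b₁]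
@[simp] lemma σ₁_b₂ : σ₁ b₂ = 0 := by simp [σ₁, b₂]
@[simp] lemma σ₁_z : σ₁ z = b₁ + y₁ ^ 2 := by simp [σ₁, z, b₁, y₁]

@[simp] lemma σ₂_y₁ : σ₂ y₁ = 0 := by simp [σ₂, y₁]
@[simp] lemma σ₂_y₂ : σ₂ y₂ = y₂ := by simp [σ₂, y₂]
@[simp] lemma σ₂_y₃ : σ₂ y₃ = 0 := by simp [σ₂, y₃]
@[simp] lemma σ₂_b₁ : σ₂ b₁ = 0 := by simp [σ₂, b₁]
@[simp] lemma σ₂_b₂ : σ₂ b₂ = b₂ := by simp [σ₂, b₂]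
@[simp] lemma σ₂_z : σ₂ z = b₂ + y₂ ^ 2 := by simp [σ₂, z, b₂, y₂]

@[simp] lemma σ₀_y₁ : σ₀ y₁ = 0 := by simp [σ₀, y₁]
@[simp] lemma σ₀_y₂ : σ₀ y₂ = 0 := by simp [σ₀, y₂]
@[simp] lemma σ₀_y₃ : σ₀ y₃ = 0 := by simp [σ₀, y₃]
@[simp] lemma σ₀_b₁ : σ₀ b₁ = 0 := by simp [σ₀, b₁]
@[simp] lemma σ₀_b₂ : σ₀ b₂ = 0 := by simp [σ₀, b₂]
@[simp] lemma σ₀_z : σ₀ z = 0 := by simp [σ₀, z]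

lemma algC (f : P →ₐ[ZMod 2] P) (a : ZMod 2) : f (C a) = C a := by
  simpa [MvPolynomial.algebraMap_eq] using f.commutes a

lemma σ₁σ₁ (p : P) : σ₁ (σ₁ p) = σ₁ p := by
  have h : σ₁.comp σ₁ = σ₁ := by ext i; fin_cases i <;> simp [σ₁]
  simpa using DFunLike.congr_fun h p

lemma σ₂σ₂ (p : P) : σ₂ (σ₂ p) = σ₂ p := by
  have h : σ₂.comp σ₂ = σ₂ := by ext i; fin_cases i <;> simp [σ₂]
  simpa using DFunLike.congr_fun h p

lemma σ₀σ₁ (p : P) : σ₀ (σ₁ p) = σ₀ p := by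
  have h : σ₀.comp σ₁ = σ₀ := by ext i; fin_cases i <;> simp [σ₀, σ₁]
  simpa using DFunLike.congr_fun h p

/-! ideal membership basics -/

lemma I6_le_J1 : I6 ≤ J1 := le_sup_left
lemma J1_le_K2 : J1 ≤ K2 := le_sup_left
lemma I6_le_K2 : I6 ≤ K2 := le_trans I6_le_J1 J1_le_K2
lemma k_mem_J1 : k ∈ J1 := Ideal.mem_sup_right (Ideal.subset_span rfl)
lemma k_mem_K2 : k ∈ K2 := J1_le_K2 k_mem_J1
lemma y₃_mem_K2 : y₃ ∈ K2 := Ideal.mem_sup_right (Ideal.subset_span rfl)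

lemma gen1 : y₁ * y₂ ∈ I6 := Ideal.subset_span (by simp)
lemma gen2 : y₁ * y₃ ∈ I6 := Ideal.subset_span (by simp)
lemma gen3 : y₂ * y₃ ∈ I6 := Ideal.subset_span (by simp)
lemma gen5 : y₂ * b₁ ∈ I6 := Ideal.subset_span (by simp)
lemma gen6 : y₃ * b₁ ∈ I6 := Ideal.subset_span (by simp)
lemma gen7 : y₁ * b₂ ∈ I6 := Ideal.subset_span (by simp)
lemma gen8 : y₃ * b₂ ∈ I6 := Ideal.subset_span (by simp)
lemma gen9 : b₁ * b₂ ∈ I6 := Ideal.subset_span (by simp)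
lemma gen10 : b₁ ^ 2 + y₁ ^ 2 * z ∈ I6 := Ideal.subset_span (by simp)
lemma gen11 : b₂ ^ 2 + y₂ ^ 2 * z ∈ I6 := Ideal.subset_span (by simp)

lemma cross {q r : P} (hq : q ∈ Ideal.span {y₁, b₁}) (hr : r ∈ Ideal.span {y₂, b₂}) :
    q * r ∈ I6 := by
  obtain ⟨u, v, rfl⟩ := Ideal.mem_span_pair.mp hq
  obtain ⟨s, t, rfl⟩ := Ideal.mem_span_pair.mp hr
  have e : (u * y₁ + v * b₁) * (s * y₂ + t * b₂)
      = (u * s) * (y₁ * y₂) + (u * t) * (y₁ * b₂) + (v * s) * (y₂ * b₁) + (v * t) * (b₁ * b₂) := by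
    ring
  rw [e]
  exact add_mem (add_mem (add_mem (Ideal.mul_mem_left _ _ gen1) (Ideal.mul_mem_left _ _ gen7))
    (Ideal.mul_mem_left _ _ gen5)) (Ideal.mul_mem_left _ _ gen9)

lemma y₁_mem_pair : y₁ ∈ Ideal.span {y₁, b₁} := Ideal.subset_span (by simp)
lemma b₁_mem_pair : b₁ ∈ Ideal.span {y₁, b₁} := Ideal.subset_span (by simp)
lemma y₂_mem_pair : y₂ ∈ Ideal.span {y₂, b₂} := Ideal.subset_span (by simp)
lemma b₂_mem_pair : b₂ ∈ Ideal.span {y₂, b₂} := Ideal.subset_span (by simp)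

lemma y₁3_mem_pair : y₁ ^ 3 ∈ Ideal.span {y₁, b₁} := by
  have : y₁ ^ 3 = y₁ ^ 2 * y₁ := by ring
  rw [this]; exact Ideal.mul_mem_left _ _ y₁_mem_pair
lemma y₂3_mem_pair : y₂ ^ 3 ∈ Ideal.span {y₂, b₂} := by
  have : y₂ ^ 3 = y₂ ^ 2 * y₂ := by ring
  rw [this]; exact Ideal.mul_mem_left _ _ y₂_mem_pair
lemma by1_mem_pair : b₁ + y₁ ^ 2 ∈ Ideal.span {y₁, b₁} := by
  refine add_mem b₁_mem_pair ?_
  have : y₁ ^ 2 = y₁ * y₁ := by ring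
  rw [this]; exact Ideal.mul_mem_left _ _ y₁_mem_pair
lemma by2_mem_pair : b₂ + y₂ ^ 2 ∈ Ideal.span {y₂, b₂} := by
  refine add_mem b₂_mem_pair ?_
  have : y₂ ^ 2 = y₂ * y₂ := by ring
  rw [this]; exact Ideal.mul_mem_left _ _ y₂_mem_pair

/-! the σ-difference lemmas -/

lemma σ₁_sub (p : P) : σ₁ p + σ₀ p ∈ Ideal.span {y₁, b₁} := by
  induction p using MvPolynomial.induction_on with
  | C a =>
      have e : σ₁ (C a) + σ₀ (C a) = 2 * C a := by rw [algC, algC]; ring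
      rw [e, two_eq_zero, zero_mul]; exact zero_mem _
  | add p q hp hq =>
      have e : σ₁ (p + q) + σ₀ (p + q) = (σ₁ p + σ₀ p) + (σ₁ q + σ₀ q) := by
        simp only [map_add]; ring
      rw [e]; exact add_mem hp hq
  | mul_X p i hp =>
      fin_cases i
      · show σ₁ (p * y₁) + σ₀ (p * y₁) ∈ _
        have e : σ₁ (p * y₁) + σ₀ (p * y₁) = σ₁ p * y₁ := by
          simp only [map_mul, σ₁_y₁, σ₀_y₁, mul_zero, add_zero]
        rw [e]; exact Ideal.mul_mem_left _ _ y₁_mem_pair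
      · show σ₁ (p * y₂) + σ₀ (p * y₂) ∈ _
        have e : σ₁ (p * y₂) + σ₀ (p * y₂) = 0 := by
          simp only [map_mul, σ₁_y₂, σ₀_y₂, mul_zero, add_zero]
        rw [e]; exact zero_mem _
      · show σ₁ (p * y₃) + σ₀ (p * y₃) ∈ _
        have e : σ₁ (p * y₃) + σ₀ (p * y₃) = 0 := by
          simp only [map_mul, σ₁_y₃, σ₀_y₃, mul_zero, add_zero]
        rw [e]; exact zero_mem _
      · show σ₁ (p * b₁) + σ₀ (p * b₁) ∈ _
        have e : σ₁ (p * b₁) + σ₀ (p * b₁) = σ₁ p * b₁ := by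
          simp only [map_mul, σ₁_b₁, σ₀_b₁, mul_zero, add_zero]
        rw [e]; exact Ideal.mul_mem_left _ _ b₁_mem_pair
      · show σ₁ (p * b₂) + σ₀ (p * b₂) ∈ _
        have e : σ₁ (p * b₂) + σ₀ (p * b₂) = 0 := by
          simp only [map_mul, σ₁_b₂, σ₀_b₂, mul_zero, add_zero]
        rw [e]; exact zero_mem _
      · show σ₁ (p * z) + σ₀ (p * z) ∈ _
        have e : σ₁ (p * z) + σ₀ (p * z) = σ₁ p * (b₁ + y₁ ^ 2) := by
          simp only [map_mul, σ₁_z, σ₀_z, mul_zero, add_zero]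
        rw [e]; exact Ideal.mul_mem_left _ _ by1_mem_pair

lemma σ₂_sub (p : P) : σ₂ p + σ₀ p ∈ Ideal.span {y₂, b₂} := by
  induction p using MvPolynomial.induction_on with
  | C a =>
      have e : σ₂ (C a) + σ₀ (C a) = 2 * C a := by rw [algC, algC]; ring
      rw [e, two_eq_zero, zero_mul]; exact zero_mem _
  | add p q hp hq =>
      have e : σ₂ (p + q) + σ₀ (p + q) = (σ₂ p + σ₀ p) + (σ₂ q + σ₀ q) := by
        simp only [map_add]; ring
      rw [e]; exact add_mem hp hq
  | mul_X p i hp =>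
      fin_cases i
      · show σ₂ (p * y₁) + σ₀ (p * y₁) ∈ _
        have e : σ₂ (p * y₁) + σ₀ (p * y₁) = 0 := by
          simp only [map_mul, σ₂_y₁, σ₀_y₁, mul_zero, add_zero]
        rw [e]; exact zero_mem _
      · show σ₂ (p * y₂) + σ₀ (p * y₂) ∈ _
        have e : σ₂ (p * y₂) + σ₀ (p * y₂) = σ₂ p * y₂ := by
          simp only [map_mul, σ₂_y₂, σ₀_y₂, mul_zero, add_zero]
        rw [e]; exact Ideal.mul_mem_left _ _ y₂_mem_pair
      · show σ₂ (p * y₃) + σ₀ (p * y₃) ∈ _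
        have e : σ₂ (p * y₃) + σ₀ (p * y₃) = 0 := by
          simp only [map_mul, σ₂_y₃, σ₀_y₃, mul_zero, add_zero]
        rw [e]; exact zero_mem _
      · show σ₂ (p * b₁) + σ₀ (p * b₁) ∈ _
        have e : σ₂ (p * b₁) + σ₀ (p * b₁) = 0 := by
          simp only [map_mul, σ₂_b₁, σ₀_b₁, mul_zero, add_zero]
        rw [e]; exact zero_mem _
      · show σ₂ (p * b₂) + σ₀ (p * b₂) ∈ _
        have e : σ₂ (p * b₂) + σ₀ (p * b₂) = σ₂ p * b₂ := by
          simp only [map_mul, σ₂_b₂, σ₀_b₂, mul_zero, add_zero]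
        rw [e]; exact Ideal.mul_mem_left _ _ b₂_mem_pair
      · show σ₂ (p * z) + σ₀ (p * z) ∈ _
        have e : σ₂ (p * z) + σ₀ (p * z) = σ₂ p * (b₂ + y₂ ^ 2) := by
          simp only [map_mul, σ₂_z, σ₀_z, mul_zero, add_zero]
        rw [e]; exact Ideal.mul_mem_left _ _ by2_mem_pair

/-! ### K2 as a span -/

def S19 : Set P :=
  {y₁ * y₂, y₁ * y₃, y₂ * y₃, y₃ ^ 2, y₂ * b₁, y₃ * b₁, y₁ * b₂, y₃ * b₂, b₁ * b₂,
    b₁ ^ 2 + y₁ ^ 2 * z, b₂ ^ 2 + y₂ ^ 2 * z, k, y₃}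

set_option maxHeartbeats 1000000 in
lemma K2_eq : K2 = Ideal.span S19 := by
  unfold K2 J1 I6 S19
  rw [← Ideal.span_union, ← Ideal.span_union]
  congr 1
  ext x
  simp only [Set.union_singleton, Set.mem_insert_iff, Set.mem_singleton_iff]
  tauto

lemma σ₁_mem_K2 {p : P} (hp : p ∈ K2) : σ₁ p ∈ Ideal.span {g₁} := by
  rw [K2_eq] at hp
  have h1 : σ₁ p ∈ Ideal.map σ₁ (Ideal.span S19) := Ideal.mem_map_of_mem _ hp
  rw [Ideal.map_span] at h1
  refine Ideal.span_le.mpr ?_ h1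
  rintro x ⟨q, hq, rfl⟩
  simp only [S19, Set.mem_insert_iff, Set.mem_singleton_iff] at hq
  rcases hq with rfl | rfl | rfl | rfl | rfl | rfl | rfl | rfl | rfl | rfl | rfl | rfl | rfl
  · simp
  · simp
  · simp
  · simp
  · simp
  · simp
  · simp
  · simp
  · simp
  · have e : σ₁ (b₁ ^ 2 + y₁ ^ 2 * z) = g₁ := by
      simp only [map_add, map_mul, map_pow, σ₁_b₁, σ₁_y₁, σ₁_z, g₁]; ring
    rw [e]; exact Ideal.subset_span rfl
  · simp
  · have e : σ₁ k = 2 * (b₁ + y₁ ^ 2) := by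
      simp only [k, map_add, map_pow, σ₁_z, σ₁_b₁, σ₁_y₁, σ₁_b₂, σ₁_y₂]; ring
    rw [e, two_eq_zero, zero_mul]
    exact Ideal.zero_mem _
  · simp

lemma σ₂_mem_K2 {p : P} (hp : p ∈ K2) : σ₂ p ∈ Ideal.span {g₂} := by
  rw [K2_eq] at hp
  have h1 : σ₂ p ∈ Ideal.map σ₂ (Ideal.span S19) := Ideal.mem_map_of_mem _ hp
  rw [Ideal.map_span] at h1
  refine Ideal.span_le.mpr ?_ h1
  rintro x ⟨q, hq, rfl⟩
  simp only [S19, Set.mem_insert_iff, Set.mem_singleton_iff] at hq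
  rcases hq with rfl | rfl | rfl | rfl | rfl | rfl | rfl | rfl | rfl | rfl | rfl | rfl | rfl
  · simp
  · simp
  · simp
  · simp
  · simp
  · simp
  · simp
  · simp
  · simp
  · simp
  · have e : σ₂ (b₂ ^ 2 + y₂ ^ 2 * z) = g₂ := by
      simp only [map_add, map_mul, map_pow, σ₂_b₂, σ₂_y₂, σ₂_z, g₂]; ring
    rw [e]; exact Ideal.subset_span rfl
  · have e : σ₂ k = 2 * (b₂ + y₂ ^ 2) := by
      simp only [k, map_add, map_pow, σ₂_z, σ₂_b₁, σ₂_y₁, σ₂_b₂, σ₂_y₂]; ring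
    rw [e, two_eq_zero, zero_mul]
    exact Ideal.zero_mem _
  · simp

lemma σ₀_of_spang₁ {q : P} (h : q ∈ Ideal.span {g₁}) : σ₀ q = 0 := by
  have h1 : σ₀ q ∈ Ideal.map σ₀ (Ideal.span {g₁}) := Ideal.mem_map_of_mem _ h
  rw [Ideal.map_span, Set.image_singleton] at h1
  have e : σ₀ g₁ = 0 := by
    simp only [g₁, map_add, map_mul, map_pow, σ₀_b₁, σ₀_y₁]
    ring
  rw [e, Ideal.span_singleton_eq_bot.mpr rfl] at h1
  exact (Ideal.mem_bot).mp h1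

/-! ### `g₁, g₂ ∈ K2` -/

lemma g₁_mem_K2 : g₁ ∈ K2 := by
  have e : g₁ = (b₁ ^ 2 + y₁ ^ 2 * z) + y₁ ^ 2 * k + y₁ * (y₁ * b₂) + (y₁ * y₂) * (y₁ * y₂)
      - 2 * (y₁ ^ 2 * z + y₁ ^ 2 * b₂ + y₁ ^ 2 * y₂ ^ 2) := by
    simp only [g₁, k]; ring
  rw [e, two_eq_zero, zero_mul, sub_zero]
  exact add_mem (add_mem (add_mem (I6_le_K2 gen10) (Ideal.mul_mem_left _ _ k_mem_K2))
    (Ideal.mul_mem_left _ _ (I6_le_K2 gen7))) (Ideal.mul_mem_left _ _ (I6_le_K2 gen1))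

lemma g₂_mem_K2 : g₂ ∈ K2 := by
  have e : g₂ = (b₂ ^ 2 + y₂ ^ 2 * z) + y₂ ^ 2 * k + y₂ * (y₂ * b₁) + (y₁ * y₂) * (y₁ * y₂)
      - 2 * (y₂ ^ 2 * z + y₂ ^ 2 * b₁ + y₁ ^ 2 * y₂ ^ 2) := by
    simp only [g₂, k]; ring
  rw [e, two_eq_zero, zero_mul, sub_zero]
  exact add_mem (add_mem (add_mem (I6_le_K2 gen11) (Ideal.mul_mem_left _ _ k_mem_K2))
    (Ideal.mul_mem_left _ _ (I6_le_K2 gen5))) (Ideal.mul_mem_left _ _ (I6_le_K2 gen1))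

lemma spang₁_le_K2 : Ideal.span {g₁} ≤ K2 :=
  Ideal.span_le.mpr (Set.singleton_subset_iff.mpr g₁_mem_K2)
lemma spang₂_le_K2 : Ideal.span {g₂} ≤ K2 :=
  Ideal.span_le.mpr (Set.singleton_subset_iff.mpr g₂_mem_K2)

/-! ### the inclusion-exclusion lemma -/

lemma Dmem (p : P) : p + σ₁ p + σ₂ p + σ₀ p ∈ K2 := by
  induction p using MvPolynomial.induction_on with
  | C a =>
      have e : (C a : P) + σ₁ (C a) + σ₂ (C a) + σ₀ (C a) = 2 * (2 * C a) := by
        rw [algC, algC, algC]; ring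
      rw [e, two_eq_zero, zero_mul]; exact zero_mem _
  | add p q hp hq =>
      have e : (p + q) + σ₁ (p + q) + σ₂ (p + q) + σ₀ (p + q)
          = (p + σ₁ p + σ₂ p + σ₀ p) + (q + σ₁ q + σ₂ q + σ₀ q) := by
        simp only [map_add]; ring
      rw [e]; exact add_mem hp hq
  | mul_X p i hp =>
      fin_cases i
      · show p * y₁ + σ₁ (p * y₁) + σ₂ (p * y₁) + σ₀ (p * y₁) ∈ _
        have e : p * y₁ + σ₁ (p * y₁) + σ₂ (p * y₁) + σ₀ (p * y₁)
            = (p + σ₁ p + σ₂ p + σ₀ p) * y₁ + (σ₂ p + σ₀ p) * y₁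
              - 2 * ((σ₂ p + σ₀ p) * y₁) := by
          simp only [map_mul, σ₁_y₁, σ₂_y₁, σ₀_y₁, mul_zero]; ring
        rw [e, two_eq_zero, zero_mul, sub_zero]
        refine add_mem (Ideal.mul_mem_right _ _ hp) (I6_le_K2 ?_)
        rw [mul_comm]
        exact cross y₁_mem_pair (σ₂_sub p)
      · show p * y₂ + σ₁ (p * y₂) + σ₂ (p * y₂) + σ₀ (p * y₂) ∈ _
        have e : p * y₂ + σ₁ (p * y₂) + σ₂ (p * y₂) + σ₀ (p * y₂)
            = (p + σ₁ p + σ₂ p + σ₀ p) * y₂ + (σ₁ p + σ₀ p) * y₂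
              - 2 * ((σ₁ p + σ₀ p) * y₂) := by
          simp only [map_mul, σ₁_y₂, σ₂_y₂, σ₀_y₂, mul_zero]; ring
        rw [e, two_eq_zero, zero_mul, sub_zero]
        refine add_mem (Ideal.mul_mem_right _ _ hp) (I6_le_K2 ?_)
        exact cross (σ₁_sub p) y₂_mem_pair
      · show p * y₃ + σ₁ (p * y₃) + σ₂ (p * y₃) + σ₀ (p * y₃) ∈ _
        have e : p * y₃ + σ₁ (p * y₃) + σ₂ (p * y₃) + σ₀ (p * y₃)
            = (p + σ₁ p + σ₂ p + σ₀ p) * y₃ - (σ₁ p + σ₂ p + σ₀ p) * y₃ := by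
          simp only [map_mul, σ₁_y₃, σ₂_y₃, σ₀_y₃, mul_zero]; ring
        rw [e]
        exact sub_mem (Ideal.mul_mem_right _ _ hp) (Ideal.mul_mem_left _ _ y₃_mem_K2)
      · show p * b₁ + σ₁ (p * b₁) + σ₂ (p * b₁) + σ₀ (p * b₁) ∈ _
        have e : p * b₁ + σ₁ (p * b₁) + σ₂ (p * b₁) + σ₀ (p * b₁)
            = (p + σ₁ p + σ₂ p + σ₀ p) * b₁ + (σ₂ p + σ₀ p) * b₁
              - 2 * ((σ₂ p + σ₀ p) * b₁) := by
          simp only [map_mul, σ₁_b₁, σ₂_b₁, σ₀_b₁, mul_zero]; ring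
        rw [e, two_eq_zero, zero_mul, sub_zero]
        refine add_mem (Ideal.mul_mem_right _ _ hp) (I6_le_K2 ?_)
        rw [mul_comm]
        exact cross b₁_mem_pair (σ₂_sub p)
      · show p * b₂ + σ₁ (p * b₂) + σ₂ (p * b₂) + σ₀ (p * b₂) ∈ _
        have e : p * b₂ + σ₁ (p * b₂) + σ₂ (p * b₂) + σ₀ (p * b₂)
            = (p + σ₁ p + σ₂ p + σ₀ p) * b₂ + (σ₁ p + σ₀ p) * b₂
              - 2 * ((σ₁ p + σ₀ p) * b₂) := by
          simp only [map_mul, σ₁_b₂, σ₂_b₂, σ₀_b₂, mul_zero]; ring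
        rw [e, two_eq_zero, zero_mul, sub_zero]
        refine add_mem (Ideal.mul_mem_right _ _ hp) (I6_le_K2 ?_)
        exact cross (σ₁_sub p) b₂_mem_pair
      · show p * z + σ₁ (p * z) + σ₂ (p * z) + σ₀ (p * z) ∈ _
        have e : p * z + σ₁ (p * z) + σ₂ (p * z) + σ₀ (p * z)
            = (p + σ₁ p + σ₂ p + σ₀ p) * z - (σ₁ p + σ₂ p + σ₀ p) * k
              + (σ₁ p + σ₀ p) * (b₂ + y₂ ^ 2) + (σ₂ p + σ₀ p) * (b₁ + y₁ ^ 2)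
              + 2 * (σ₁ p * (b₁ + y₁ ^ 2) + σ₂ p * (b₂ + y₂ ^ 2)) := by
          simp only [map_mul, σ₁_z, σ₂_z, σ₀_z, mul_zero, k]; ring
        rw [e, two_eq_zero, zero_mul, add_zero]
        refine add_mem (add_mem (sub_mem (Ideal.mul_mem_right _ _ hp)
          (Ideal.mul_mem_left _ _ k_mem_K2)) (I6_le_K2 ?_)) (I6_le_K2 ?_)
        · exact cross (σ₁_sub p) by2_mem_pair
        · rw [mul_comm]; exact cross by1_mem_pair (σ₂_sub p)

/-! ### reduction of `w19` -/

lemma hww : w19 + y₁ ^ 3 + y₂ ^ 3 ∈ K2 := by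
  have e : w19 + y₁ ^ 3 + y₂ ^ 3
      = y₁ * k + y₂ * k + y₁ * b₂ + y₂ * (y₁ * y₂) + y₂ * b₁ + y₁ * (y₁ * y₂)
        - 2 * (y₁ * b₂ + y₂ * (y₁ * y₂) + y₂ * b₁ + y₁ * (y₁ * y₂)) := by
    simp only [w19, k]; ring
  rw [e, two_eq_zero, zero_mul, sub_zero]
  exact add_mem (add_mem (add_mem (add_mem (add_mem
    (Ideal.mul_mem_left _ _ k_mem_K2) (Ideal.mul_mem_left _ _ k_mem_K2))
    (I6_le_K2 gen7)) (Ideal.mul_mem_left _ _ (I6_le_K2 gen1)))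
    (I6_le_K2 gen5)) (Ideal.mul_mem_left _ _ (I6_le_K2 gen1))

lemma hw (p : P) : p * w19 + σ₁ p * y₁ ^ 3 + σ₂ p * y₂ ^ 3 ∈ K2 := by
  have e : p * w19 + σ₁ p * y₁ ^ 3 + σ₂ p * y₂ ^ 3
      = (p + σ₁ p + σ₂ p + σ₀ p) * w19 + (σ₁ p + σ₂ p + σ₀ p) * (w19 + y₁ ^ 3 + y₂ ^ 3)
        + (σ₁ p + σ₀ p) * y₂ ^ 3 + (σ₂ p + σ₀ p) * y₁ ^ 3
        - 2 * (σ₁ p * w19 + σ₂ p * w19 + σ₀ p * w19 + σ₁ p * y₂ ^ 3 + σ₂ p * y₁ ^ 3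
          + σ₀ p * y₁ ^ 3 + σ₀ p * y₂ ^ 3) := by
    ring
  rw [e, two_eq_zero, zero_mul, sub_zero]
  refine add_mem (add_mem (add_mem (Ideal.mul_mem_right _ _ (Dmem p))
    (Ideal.mul_mem_left _ _ hww)) (I6_le_K2 ?_)) (I6_le_K2 ?_)
  · exact cross (σ₁_sub p) y₂3_mem_pair
  · rw [mul_comm]; exact cross y₁3_mem_pair (σ₂_sub p)

/-! ### primality and cancellation -/

lemma primeX0 : Prime (X 0 : P) := by
  rw [← MulEquiv.prime_iff (finSuccEquiv (ZMod 2) 5).toMulEquiv]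
  have h := finSuccEquiv_X_zero (R := ZMod 2) (n := 5)
  have hp : Prime (Polynomial.X (R := MvPolynomial (Fin 5) (ZMod 2))) := Polynomial.prime_X
  show Prime ((finSuccEquiv (ZMod 2) 5) (X 0))
  rw [h]; exact hp

lemma primeY1 : Prime y₁ := primeX0

lemma primeY2 : Prime y₂ := by
  show Prime (X 1 : P)
  rw [← MulEquiv.prime_iff (renameEquiv (ZMod 2) (Equiv.swap (0 : Fin 6) 1)).toMulEquiv]
  show Prime ((renameEquiv (ZMod 2) (Equiv.swap (0 : Fin 6) 1)) (X 1))
  simpa using primeX0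

lemma cancel_aux {x g : P} (hx : Prime x) (hg : ¬ x ∣ g) :
    ∀ (n : ℕ) (q c : P), q * x ^ n = c * g → g ∣ q := by
  intro n
  induction n with
  | zero =>
      intro q c h
      exact ⟨c, by rw [mul_comm c g] at h; simpa using h⟩
  | succ n ih =>
      intro q c h
      have hxd : x ∣ c * g := ⟨q * x ^ n, by rw [← h]; ring⟩
      rcases hx.2.2 c g hxd with hc | hgg
      · obtain ⟨d, rfl⟩ := hc
        refine ih q d ?_
        have hx0 : x ≠ 0 := hx.ne_zero
        apply mul_left_cancel₀ hx0
        calc x * (q * x ^ n) = q * x ^ (n + 1) := by ring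
          _ = x * d * g := h
          _ = x * (d * g) := by ring
      · exact absurd hgg hg

lemma cancel3 {g xv q : P} (hx : Prime xv) (hg : ¬ xv ∣ g)
    (h : q * xv ^ 3 ∈ Ideal.span {g}) : q ∈ Ideal.span {g} := by
  rw [Ideal.mem_span_singleton] at h ⊢
  obtain ⟨c, hc⟩ := h
  exact cancel_aux hx hg 3 q c (by rw [hc]; ring)

def ev₁ : P →ₐ[ZMod 2] P := aeval fun i => if i = 0 then 0 else X i
def ev₂ : P →ₐ[ZMod 2] P := aeval fun i => if i = 1 then 0 else X i

lemma not_dvd_g₁ : ¬ y₁ ∣ g₁ := by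
  rintro ⟨t, ht⟩
  have happ := congrArg ev₁ ht
  have h1 : ev₁ g₁ = b₁ ^ 2 := by
    simp only [g₁, map_add, map_mul, map_pow]
    simp [ev₁, b₁, y₁]
  have h2 : ev₁ (y₁ * t) = 0 := by
    simp only [map_mul]
    simp [ev₁, y₁]
  rw [h1, h2] at happ
  exact pow_ne_zero 2 (X_ne_zero (R := ZMod 2) (3 : Fin 6)) (by simpa [b₁] using happ)

lemma not_dvd_g₂ : ¬ y₂ ∣ g₂ := by
  rintro ⟨t, ht⟩
  have happ := congrArg ev₂ ht
  have h1 : ev₂ g₂ = b₂ ^ 2 := by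
    simp only [g₂, map_add, map_mul, map_pow]
    simp [ev₂, b₂, y₂]
  have h2 : ev₂ (y₂ * t) = 0 := by
    simp only [map_mul]
    simp [ev₂, y₂]
  rw [h1, h2] at happ
  exact pow_ne_zero 2 (X_ne_zero (R := ZMod 2) (4 : Fin 6)) (by simpa [b₂] using happ)

/-! ### the main polynomial-level lemma -/

lemma annP (p : P) : p * w19 ∈ J1 ↔ p ∈ K2 := by
  constructor
  · intro hpw
    have he : σ₁ p * y₁ ^ 3 + σ₂ p * y₂ ^ 3 ∈ K2 := by
      have h' : σ₁ p * y₁ ^ 3 + σ₂ p * y₂ ^ 3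
          = (p * w19 + σ₁ p * y₁ ^ 3 + σ₂ p * y₂ ^ 3) - p * w19 := by ring
      rw [h']
      exact sub_mem (hw p) (J1_le_K2 hpw)
    have h1 : σ₁ p * y₁ ^ 3 ∈ Ideal.span {g₁} := by
      have h := σ₁_mem_K2 he
      have hc : σ₁ (σ₁ p * y₁ ^ 3 + σ₂ p * y₂ ^ 3) = σ₁ p * y₁ ^ 3 := by
        simp only [map_add, map_mul, map_pow, σ₁_y₁, σ₁_y₂, σ₁σ₁]
        ring
      rwa [hc] at h
    have h2 : σ₂ p * y₂ ^ 3 ∈ Ideal.span {g₂} := by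
      have h := σ₂_mem_K2 he
      have hc : σ₂ (σ₁ p * y₁ ^ 3 + σ₂ p * y₂ ^ 3) = σ₂ p * y₂ ^ 3 := by
        simp only [map_add, map_mul, map_pow, σ₂_y₁, σ₂_y₂, σ₂σ₂]
        ring
      rwa [hc] at h
    have hq1 : σ₁ p ∈ Ideal.span {g₁} := cancel3 primeY1 not_dvd_g₁ h1
    have hq2 : σ₂ p ∈ Ideal.span {g₂} := cancel3 primeY2 not_dvd_g₂ h2
    have h0 : σ₀ p = 0 := by rw [← σ₀σ₁ p]; exact σ₀_of_spang₁ hq1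
    have hfin : p = (p + σ₁ p + σ₂ p + σ₀ p) - σ₁ p - σ₂ p - σ₀ p := by ring
    rw [hfin]
    refine sub_mem (sub_mem (sub_mem (Dmem p) (spang₁_le_K2 hq1)) (spang₂_le_K2 hq2)) ?_
    rw [h0]; exact zero_mem _
  · intro hp
    have hp' : p ∈ J1 ⊔ Ideal.span {y₃} := hp
    rcases Submodule.mem_sup.mp hp' with ⟨j, hj, s, hs, rfl⟩
    obtain ⟨q, rfl⟩ := Ideal.mem_span_singleton'.mp hs
    have hy3w : y₃ * w19 ∈ I6 := by
      have e : y₃ * w19 = z * (y₁ * y₃) + y₁ * (y₃ * b₁) + z * (y₂ * y₃) + y₂ * (y₃ * b₂) := by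
        simp only [w19]; ring
      rw [e]
      exact add_mem (add_mem (add_mem (Ideal.mul_mem_left _ _ gen2)
        (Ideal.mul_mem_left _ _ gen6)) (Ideal.mul_mem_left _ _ gen3))
        (Ideal.mul_mem_left _ _ gen8)
    have e : (j + q * y₃) * w19 = j * w19 + q * (y₃ * w19) := by ring
    rw [e]
    exact add_mem (Ideal.mul_mem_right _ _ hj) (Ideal.mul_mem_left _ _ (I6_le_J1 hy3w))

/-! ### quotient bookkeeping -/

lemma toB_surjective : Function.Surjective toB := by
  intro b
  obtain ⟨a, rfl⟩ := Ideal.Quotient.mk_surjective b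
  obtain ⟨p, rfl⟩ := Ideal.Quotient.mk_surjective a
  exact ⟨p, rfl⟩

lemma toB_mul (p q : P) : toB (p * q) = toB p * toB q := by
  simp only [toB, map_mul]

lemma toB_zero_iff (p : P) : toB p = 0 ↔ p ∈ J1 := by
  constructor
  · intro h
    have h1 : Ideal.Quotient.mk I6 p ∈ Ideal.span {Ideal.Quotient.mk I6 k} :=
      Ideal.Quotient.eq_zero_iff_mem.mp h
    obtain ⟨c, hc⟩ := Ideal.mem_span_singleton'.mp h1
    obtain ⟨q, rfl⟩ := Ideal.Quotient.mk_surjective c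
    rw [← map_mul] at hc
    have hsub : q * k - p ∈ I6 := Ideal.Quotient.eq.mp hc
    have e : p = -(q * k - p) + q * k := by ring
    rw [e]
    exact add_mem (I6_le_J1 (neg_mem hsub))
      ((le_sup_right : Ideal.span {k} ≤ J1) (Ideal.mul_mem_left _ _ (Ideal.subset_span rfl)))
  · intro h
    rcases Submodule.mem_sup.mp h with ⟨i, hi, s, hs, rfl⟩
    obtain ⟨q, rfl⟩ := Ideal.mem_span_singleton'.mp hs
    show Ideal.Quotient.mk _ (Ideal.Quotient.mk I6 (i + q * k)) = 0
    rw [Ideal.Quotient.eq_zero_iff_mem, map_add, map_mul]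
    rw [Ideal.Quotient.eq_zero_iff_mem.mpr hi, zero_add]
    exact Ideal.mul_mem_left _ _ (Ideal.subset_span rfl)

set_option maxHeartbeats 1000000 in
set_option synthInstance.maxHeartbeats 400000 in
lemma toB_mem_span_iff (p : P) : toB p ∈ Ideal.span {toB y₃} ↔ p ∈ K2 := by
  constructor
  · intro h
    obtain ⟨c, hc⟩ := Ideal.mem_span_singleton'.mp h
    obtain ⟨q, rfl⟩ := toB_surjective c
    rw [← toB_mul] at hc
    have hz : toB (q * y₃ - p) = 0 := by
      have hsplit : toB (q * y₃ - p) = toB (q * y₃) - toB p := by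
        show Ideal.Quotient.mk _ (Ideal.Quotient.mk I6 (q * y₃ - p)) = _
        rw [map_sub, map_sub]
        rfl
      rw [hsplit, hc, sub_self]
    have hj : q * y₃ - p ∈ J1 := (toB_zero_iff _).mp hz
    have e : p = -(q * y₃ - p) + q * y₃ := by ring
    rw [e]
    exact add_mem (J1_le_K2 (neg_mem hj))
      ((le_sup_right : Ideal.span {y₃} ≤ K2) (Ideal.mul_mem_left _ _ (Ideal.subset_span rfl)))
  · intro hp
    have hp' : p ∈ J1 ⊔ Ideal.span {y₃} := hp
    rcases Submodule.mem_sup.mp hp' with ⟨j, hj, s, hs, rfl⟩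
    obtain ⟨q, rfl⟩ := Ideal.mem_span_singleton'.mp hs
    have : toB (j + q * y₃) = toB q * toB y₃ := by
      have hz : toB j = 0 := (toB_zero_iff _).mpr hj
      calc toB (j + q * y₃) = toB j + toB q * toB y₃ := by simp only [toB, map_add, map_mul]
        _ = toB q * toB y₃ := by rw [hz, zero_add]
    rw [this]
    exact Ideal.mem_span_singleton'.mpr ⟨toB q, rfl⟩

/-- In `A/(k)`, the annihilator of the image of `y₁z + y₁b₁ + y₂z + y₂b₂` is the ideal
generated by the image of `y₃`. -/
theorem stmt19 (a : B) :
    a * toB (y₁ * z + y₁ * b₁ + y₂ * z + y₂ * b₂) = 0 ↔ a ∈ Ideal.span {toB y₃} := by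
  obtain ⟨p, rfl⟩ := toB_surjective a
  have hwe : (y₁ * z + y₁ * b₁ + y₂ * z + y₂ * b₂ : P) = w19 := rfl
  rw [hwe, ← toB_mul, toB_zero_iff, toB_mem_span_iff]
  exact annP p

end
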